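/- Let u(x,y) = a(x²−y²) with a ∈ R and r > 0. Then sup_{z ∈ B_r} ‖∇u(z)‖ ≤ √2 · sup_{p,q ∈ ∂B_r, p≠q} |u(p)-u(q)|/|p-q|, where B_r is the closed ball of radius r centered at the origin in R². -/
import Mathlib


/-- u(x,y)=a(x²−y²) is gradually varied semi-preserving with constant √2 on the closed
ball of radius r: the sup of the gradient norm over the ball is at most √2 times the sup
of boundary difference quotients over distinct boundary points. -/
theorem stmt_10 (a r : ℝ) (hr : 0 < r) (u : ℝ × ℝ → ℝ)
    (hu : ∀ p : ℝ × ℝ, u p = a * (p.1 ^ 2 - p.2 ^ 2)) :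
    sSup {g : ℝ | ∃ x y : ℝ, x ^ 2 + y ^ 2 ≤ r ^ 2 ∧
        g = Real.sqrt ((2 * a * x) ^ 2 + (-(2 * a * y)) ^ 2)} ≤
      Real.sqrt 2 * sSup {s : ℝ | ∃ p q : ℝ × ℝ,
        p.1 ^ 2 + p.2 ^ 2 = r ^ 2 ∧ q.1 ^ 2 + q.2 ^ 2 = r ^ 2 ∧ p ≠ q ∧
        s = |u p - u q| / Real.sqrt ((p.1 - q.1) ^ 2 + (p.2 - q.2) ^ 2)} := by
  set Q := {s : ℝ | ∃ p q : ℝ × ℝ,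
        p.1 ^ 2 + p.2 ^ 2 = r ^ 2 ∧ q.1 ^ 2 + q.2 ^ 2 = r ^ 2 ∧ p ≠ q ∧
        s = |u p - u q| / Real.sqrt ((p.1 - q.1) ^ 2 + (p.2 - q.2) ^ 2)} with hQ
  have ha : (0:ℝ) ≤ 2 * |a| * r := by positivity
  -- LHS ≤ 2|a|r
  have hL : sSup {g : ℝ | ∃ x y : ℝ, x ^ 2 + y ^ 2 ≤ r ^ 2 ∧
        g = Real.sqrt ((2 * a * x) ^ 2 + (-(2 * a * y)) ^ 2)} ≤ 2 * |a| * r := by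
    apply Real.sSup_le _ ha
    rintro g ⟨x, y, hxy, rfl⟩
    have h1 : (2 * a * x) ^ 2 + (-(2 * a * y)) ^ 2 ≤ (2 * |a| * r) ^ 2 := by
      have h2 : a ^ 2 * (x ^ 2 + y ^ 2) ≤ a ^ 2 * r ^ 2 := by nlinarith [sq_nonneg a]
      have : |a| ^ 2 = a ^ 2 := sq_abs a
      nlinarith
    calc Real.sqrt ((2 * a * x) ^ 2 + (-(2 * a * y)) ^ 2)
        ≤ Real.sqrt ((2 * |a| * r) ^ 2) := Real.sqrt_le_sqrt h1
      _ = 2 * |a| * r := Real.sqrt_sq ha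
  refine hL.trans ?_
  -- Q is bounded above
  have hbdd : BddAbove Q := by
    refine ⟨4 * |a| * r, ?_⟩
    rintro s ⟨p, q, hp, hq, hpq, rfl⟩
    set d := Real.sqrt ((p.1 - q.1) ^ 2 + (p.2 - q.2) ^ 2) with hd
    have hdpos : 0 < d := by
      apply Real.sqrt_pos.2
      by_contra hle
      push_neg at hle
      have h1 : (p.1 - q.1) ^ 2 = 0 :=
        le_antisymm (by nlinarith [sq_nonneg (p.2 - q.2)]) (sq_nonneg _)
      have h2 : (p.2 - q.2) ^ 2 = 0 :=
        le_antisymm (by nlinarith [sq_nonneg (p.1 - q.1)]) (sq_nonneg _)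
      have e1 := pow_eq_zero_iff (n := 2) (by norm_num) |>.1 h1
      have e2 := pow_eq_zero_iff (n := 2) (by norm_num) |>.1 h2
      exact hpq (Prod.ext (by linarith [sub_eq_zero.1 e1]) (by linarith [sub_eq_zero.1 e2]))
    have h1 : |p.1 - q.1| ≤ d := by
      rw [hd, ← Real.sqrt_sq_eq_abs]
      exact Real.sqrt_le_sqrt (by nlinarith [sq_nonneg (p.2 - q.2)])
    have h2 : |p.2 - q.2| ≤ d := by
      rw [hd, ← Real.sqrt_sq_eq_abs]
      exact Real.sqrt_le_sqrt (by nlinarith [sq_nonneg (p.1 - q.1)])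
    have hp1 : |p.1| ≤ r := by
      rw [← Real.sqrt_sq hr.le, ← Real.sqrt_sq_eq_abs]
      exact Real.sqrt_le_sqrt (by nlinarith [sq_nonneg p.2])
    have hq1 : |q.1| ≤ r := by
      rw [← Real.sqrt_sq hr.le, ← Real.sqrt_sq_eq_abs]
      exact Real.sqrt_le_sqrt (by nlinarith [sq_nonneg q.2])
    have hp2 : |p.2| ≤ r := by
      rw [← Real.sqrt_sq hr.le, ← Real.sqrt_sq_eq_abs]
      exact Real.sqrt_le_sqrt (by nlinarith [sq_nonneg p.1])
    have hq2 : |q.2| ≤ r := by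
      rw [← Real.sqrt_sq hr.le, ← Real.sqrt_sq_eq_abs]
      exact Real.sqrt_le_sqrt (by nlinarith [sq_nonneg q.1])
    rw [div_le_iff₀ hdpos, hu, hu]
    have key : |a * (p.1 ^ 2 - p.2 ^ 2) - a * (q.1 ^ 2 - q.2 ^ 2)|
        ≤ |a| * (|p.1 - q.1| * (2 * r) + |p.2 - q.2| * (2 * r)) := by
      rw [show a * (p.1 ^ 2 - p.2 ^ 2) - a * (q.1 ^ 2 - q.2 ^ 2)
          = a * ((p.1 - q.1) * (p.1 + q.1) - (p.2 - q.2) * (p.2 + q.2)) by ring, abs_mul]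
      gcongr
      calc |(p.1 - q.1) * (p.1 + q.1) - (p.2 - q.2) * (p.2 + q.2)|
          ≤ |(p.1 - q.1) * (p.1 + q.1)| + |(p.2 - q.2) * (p.2 + q.2)| := abs_sub _ _
        _ ≤ |p.1 - q.1| * (2 * r) + |p.2 - q.2| * (2 * r) := by
            rw [abs_mul, abs_mul]
            gcongr
            · exact (abs_add_le _ _).trans (by linarith)
            · exact (abs_add_le _ _).trans (by linarith)
    calc |a * (p.1 ^ 2 - p.2 ^ 2) - a * (q.1 ^ 2 - q.2 ^ 2)|
        ≤ |a| * (|p.1 - q.1| * (2 * r) + |p.2 - q.2| * (2 * r)) := key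
      _ ≤ |a| * (d * (2 * r) + d * (2 * r)) := by gcongr
      _ = 4 * |a| * r * d := by ring
  -- the witness element: p = (r,0), q = (0,r)
  have hmem : Real.sqrt 2 * |a| * r ∈ Q := by
    refine ⟨(r, 0), (0, r), by simp, by simp, ?_, ?_⟩
    · simp [Prod.ext_iff, hr.ne']
    · have h2 : ((r:ℝ) - 0) ^ 2 + ((0:ℝ) - r) ^ 2 = 2 * r ^ 2 := by ring
      rw [hu, hu]
      simp only [h2]
      have hs : Real.sqrt (2 * r ^ 2) = Real.sqrt 2 * r := by
        rw [Real.sqrt_mul (by norm_num), Real.sqrt_sq hr.le]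
      rw [hs]
      have : |a * ((r:ℝ) ^ 2 - 0 ^ 2) - a * (0 ^ 2 - r ^ 2)| = 2 * |a| * r ^ 2 := by
        rw [show a * ((r:ℝ) ^ 2 - 0 ^ 2) - a * (0 ^ 2 - r ^ 2) = 2 * (a * r ^ 2) by ring,
          abs_mul, abs_mul, abs_of_nonneg (by norm_num : (0:ℝ) ≤ 2), abs_of_nonneg (sq_nonneg r)]
        ring
      rw [this]
      have h22 : Real.sqrt 2 * Real.sqrt 2 = 2 := Real.mul_self_sqrt (by norm_num)
      rw [eq_div_iff (ne_of_gt (by positivity : (0:ℝ) < Real.sqrt 2 * r))]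
      linear_combination (|a| * r ^ 2) * h22
    
  have hle : Real.sqrt 2 * |a| * r ≤ sSup Q := le_csSup hbdd hmem
  have h22 : Real.sqrt 2 * Real.sqrt 2 = 2 := Real.mul_self_sqrt (by norm_num)
  calc 2 * |a| * r = Real.sqrt 2 * (Real.sqrt 2 * |a| * r) := by rw [← mul_assoc, ← mul_assoc, h22]
    _ ≤ Real.sqrt 2 * sSup Q := by
        have : (0:ℝ) ≤ Real.sqrt 2 := Real.sqrt_nonneg 2
        nlinarith
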